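/- Assume the curve convention: a > 0 and y : [−a,a] → ℝ² is C⁴ with θ⃗·y′(θ) = 0, θ⃗⊥·y′(θ) < 0, θ⃗·y″(θ) > 0 for all θ ∈ [−a,a], where θ⃗ = (cos θ, sin θ), θ⃗⊥ = (−sin θ, cos θ). Let A₁ : [−a,a] → (−π/2, π/2) be C¹ with A₁(0) = 0 and (cos A₁(θ), sin A₁(θ))·(y(θ) − y(0)) = 0 for all θ. Define R₁(θ,α) := (cos α, sin α)·(y(θ) − y(0)). Then there exist a′ ∈ (0,a] and constants c₁, c₂ > 0 such that for all θ ∈ [−a′,a′] and all α ∈ [−π/2, π/2]: (i) R₁(θ,α) = 0 if and only if θ(A₁(θ) − α) = 0, and if θ(A₁(θ) − α) ≠ 0 then c₁ ≤ R₁(θ,α)/(θ(A₁(θ) − α)) ≤ c₂; (ii) if θ ≠ α then c₁ ≤ ((cos α, sin α)·y′(θ))/(θ − α) ≤ c₂; (iii) |(−sin α, cos α)·(y(θ) − y(0))| ≤ c₂ |θ|. -/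

import Mathlib

open Real Set

lemma hd_fst {y : ℝ → ℝ × ℝ} {v : ℝ × ℝ} {s : ℝ} (h : HasDerivAt y v s) :
    HasDerivAt (fun t => (y t).1) v.1 s := by
  exact hasFDerivAt_fst.comp_hasDerivAt s h

lemma hd_snd {y : ℝ → ℝ × ℝ} {v : ℝ × ℝ} {s : ℝ} (h : HasDerivAt y v s) :
    HasDerivAt (fun t => (y t).2) v.2 s := by
  exact hasFDerivAt_snd.comp_hasDerivAt s h

lemma sin_div_bounds {t : ℝ} (ht : t ≠ 0) (ht' : |t| ≤ 3 * π / 4) :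
    1/4 ≤ Real.sin t / t ∧ Real.sin t / t ≤ 1 := by
  have hpi1 : (3.14 : ℝ) < π := by linarith [Real.pi_gt_d2]
  have hpi2 : π < 3.15 := by linarith [Real.pi_lt_d2]
  have key : ∀ u : ℝ, 0 < u → u ≤ 3 * π / 4 → u / 4 ≤ Real.sin u ∧ Real.sin u ≤ u := by
    intro u hu hu'
    refine ⟨?_, (Real.sin_lt hu).le⟩
    rcases le_or_gt u (π/2) with h | h
    · have h1 := Real.mul_le_sin hu.le h
      rw [div_mul_eq_mul_div, div_le_iff₀ Real.pi_pos] at h1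
      nlinarith
    · have h1 : Real.sin u = Real.cos (u - π/2) := by rw [Real.cos_sub]; simp
      have h2 : Real.cos (π/4) ≤ Real.cos (u - π/2) :=
        Real.cos_le_cos_of_nonneg_of_le_pi (by linarith) (by linarith) (by linarith)
      rw [Real.cos_pi_div_four] at h2
      have h3 : (1.414:ℝ) ≤ Real.sqrt 2 := by
        nlinarith [Real.sq_sqrt (by norm_num : (0:ℝ) ≤ 2), Real.sqrt_nonneg 2]
      linarith
  rcases ht.lt_or_gt with h | h
  · have habs : |t| = -t := abs_of_neg h
    obtain ⟨k1, k2⟩ := key (-t) (by linarith) (by linarith [habs ▸ ht'])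
    rw [Real.sin_neg] at k1 k2
    have he : Real.sin t / t = (-Real.sin t) / (-t) := by rw [neg_div_neg_eq]
    rw [he, le_div_iff₀ (by linarith : (0:ℝ) < -t), div_le_one (by linarith : (0:ℝ) < -t)]
    constructor <;> linarith
  · have habs : |t| = t := abs_of_pos h
    obtain ⟨k1, k2⟩ := key t h (by linarith [habs ▸ ht'])
    rw [le_div_iff₀ h, div_le_one h]
    constructor <;> linarith

set_option maxHeartbeats 1000000 in
theorem stmt2 (a : ℝ) (ha : 0 < a) (y : ℝ → ℝ × ℝ) (hy : ContDiff ℝ 4 y)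
    (htang : ∀ θ ∈ Icc (-a) a,
      Real.cos θ * (deriv y θ).1 + Real.sin θ * (deriv y θ).2 = 0)
    (hperp : ∀ θ ∈ Icc (-a) a,
      -Real.sin θ * (deriv y θ).1 + Real.cos θ * (deriv y θ).2 < 0)
    (hcurv : ∀ θ ∈ Icc (-a) a,
      0 < Real.cos θ * (deriv (deriv y) θ).1 + Real.sin θ * (deriv (deriv y) θ).2)
    (A₁ : ℝ → ℝ) (hA₁ : ContDiff ℝ 1 A₁)
    (hA₁mem : ∀ θ ∈ Icc (-a) a, A₁ θ ∈ Ioo (-(π / 2)) (π / 2))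
    (hA₁0 : A₁ 0 = 0)
    (hortho : ∀ θ ∈ Icc (-a) a,
      Real.cos (A₁ θ) * (y θ - y 0).1 + Real.sin (A₁ θ) * (y θ - y 0).2 = 0) :
    ∃ a' ∈ Ioc 0 a, ∃ c₁ c₂ : ℝ, 0 < c₁ ∧ 0 < c₂ ∧
      ∀ θ ∈ Icc (-a') a', ∀ α ∈ Icc (-(π / 2)) (π / 2),
        ((Real.cos α * (y θ - y 0).1 + Real.sin α * (y θ - y 0).2 = 0 ↔
            θ * (A₁ θ - α) = 0) ∧
          (θ * (A₁ θ - α) ≠ 0 →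
            c₁ ≤ (Real.cos α * (y θ - y 0).1 + Real.sin α * (y θ - y 0).2) /
                (θ * (A₁ θ - α)) ∧
            (Real.cos α * (y θ - y 0).1 + Real.sin α * (y θ - y 0).2) /
                (θ * (A₁ θ - α)) ≤ c₂)) ∧
        (θ ≠ α →
          c₁ ≤ (Real.cos α * (deriv y θ).1 + Real.sin α * (deriv y θ).2) / (θ - α) ∧
          (Real.cos α * (deriv y θ).1 + Real.sin α * (deriv y θ).2) / (θ - α) ≤ c₂) ∧
        |(-Real.sin α) * (y θ - y 0).1 + Real.cos α * (y θ - y 0).2| ≤ c₂ * |θ| := by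
  have hpi1 : (3.14 : ℝ) < π := by linarith [Real.pi_gt_d2]
  have hpi2 : π < 3.15 := by linarith [Real.pi_lt_d2]
  set r : ℝ → ℝ := fun s => -Real.sin s * (deriv y s).1 + Real.cos s * (deriv y s).2
    with hrdef
  have hdy_cont : Continuous (deriv y) := hy.continuous_deriv (by norm_num)
  have hr_cont : Continuous r :=
    (Real.continuous_sin.neg.mul (continuous_fst.comp hdy_cont)).add
      (Real.continuous_cos.mul (continuous_snd.comp hdy_cont))
  obtain ⟨x₀, hx₀, hmax⟩ := isCompact_Icc.exists_isMaxOn (s := Icc (-a) a)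
    ⟨0, by constructor <;> linarith⟩ hr_cont.continuousOn
  set m : ℝ := -(r x₀) with hmdef
  have hm_pos : 0 < m := by
    have := hperp x₀ hx₀
    simp only [hmdef, hrdef]
    linarith
  have hrle : ∀ s ∈ Icc (-a) a, r s ≤ -m := by
    intro s hs
    have := isMaxOn_iff.mp hmax s hs
    simpa [hmdef] using this
  obtain ⟨M, hM⟩ := isCompact_Icc.exists_bound_of_continuousOn hr_cont.continuousOn
  have hMr : ∀ s ∈ Icc (-a) a, |r s| ≤ M := by
    intro s hs; simpa using hM s hs
  have hmM : m ≤ M := by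
    have := hMr x₀ hx₀
    have := abs_le.mp this
    simp only [hmdef]
    linarith [this.1]
  have hM_pos : 0 < M := lt_of_lt_of_le hm_pos hmM
  -- choose a'
  obtain ⟨δ, hδpos, hδ⟩ := Metric.continuousAt_iff.mp hA₁.continuous.continuousAt
    (π/8) (by positivity)
  set a' : ℝ := min a (min (π/8) (δ/2)) with ha'def
  have ha'pos : 0 < a' := by
    apply lt_min ha
    apply lt_min (by positivity) (by positivity)
  have ha'a : a' ≤ a := min_le_left _ _
  have ha'π : a' ≤ π/8 := le_trans (min_le_right _ _) (min_le_left _ _)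
  have ha'δ : a' ≤ δ/2 := le_trans (min_le_right _ _) (min_le_right _ _)
  have hIcc_sub : Icc (-a') a' ⊆ Icc (-a) a := by
    intro x hx; exact ⟨by linarith [hx.1], by linarith [hx.2]⟩
  have hA₁small : ∀ θ ∈ Icc (-a') a', |A₁ θ| < π/8 := by
    intro θ hθ
    have h1 : dist θ 0 < δ := by
      rw [Real.dist_eq, sub_zero]
      have := abs_le.mpr ⟨hθ.1, hθ.2⟩
      linarith
    have := hδ h1
    rw [Real.dist_eq, hA₁0, sub_zero] at this
    exact this
  -- component identities for deriv y
  have hcomp : ∀ s ∈ Icc (-a) a,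
      (deriv y s).1 = -Real.sin s * r s ∧ (deriv y s).2 = Real.cos s * r s := by
    intro s hs
    have h1 := htang s hs
    have h2 := Real.sin_sq_add_cos_sq s
    constructor
    · simp only [hrdef]
      linear_combination Real.cos s * h1 - (deriv y s).1 * h2
    · simp only [hrdef]
      linear_combination Real.sin s * h1 - (deriv y s).2 * h2
  have hyd : ∀ s : ℝ, HasDerivAt y (deriv y s) s := fun s =>
    ((hy.differentiable (by norm_num)) s).hasDerivAt
  have hφ : ∀ β s : ℝ, HasDerivAt (fun t => -Real.sin β * (y t).1 + Real.cos β * (y t).2)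
      (-Real.sin β * (deriv y s).1 + Real.cos β * (deriv y s).2) s := fun β s =>
    ((hd_fst (hyd s)).const_mul _).add ((hd_snd (hyd s)).const_mul _)
  -- MVT
  have hMVT : ∀ β θ : ℝ, θ ∈ Icc (-a') a' → θ ≠ 0 →
      ∃ ξ ∈ Icc (-a') a',
        -Real.sin β * ((y θ).1 - (y 0).1) + Real.cos β * ((y θ).2 - (y 0).2)
          = (r ξ * Real.cos (β - ξ)) * θ := by
    intro β θ hθ hθ0
    have hcont : Continuous fun t => -Real.sin β * (y t).1 + Real.cos β * (y t).2 := by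
      have hc := hy.continuous
      exact (continuous_const.mul (continuous_fst.comp hc)).add
        (continuous_const.mul (continuous_snd.comp hc))
    have key : ∀ ξ ∈ Icc (-a) a,
        -Real.sin β * (deriv y ξ).1 + Real.cos β * (deriv y ξ).2
          = r ξ * Real.cos (β - ξ) := by
      intro ξ hξ
      obtain ⟨e1, e2⟩ := hcomp ξ hξ
      rw [e1, e2, Real.cos_sub]; ring
    rcases hθ0.lt_or_gt with h | h
    · obtain ⟨ξ, hξ, hslope⟩ := exists_hasDerivAt_eq_slope
        (fun t => -Real.sin β * (y t).1 + Real.cos β * (y t).2)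
        (fun s => -Real.sin β * (deriv y s).1 + Real.cos β * (deriv y s).2)
        h hcont.continuousOn (fun x _ => hφ β x)
      have hξmem : ξ ∈ Icc (-a') a' := ⟨by linarith [hξ.1, hθ.1], by linarith [hξ.2]⟩
      refine ⟨ξ, hξmem, ?_⟩
      rw [← key ξ (hIcc_sub hξmem)]
      rw [hslope]
      field_simp [hθ0]
      ring
    · obtain ⟨ξ, hξ, hslope⟩ := exists_hasDerivAt_eq_slope
        (fun t => -Real.sin β * (y t).1 + Real.cos β * (y t).2)
        (fun s => -Real.sin β * (deriv y s).1 + Real.cos β * (deriv y s).2)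
        h hcont.continuousOn (fun x _ => hφ β x)
      have hξmem : ξ ∈ Icc (-a') a' := ⟨by linarith [hξ.1], by linarith [hξ.2, hθ.2]⟩
      refine ⟨ξ, hξmem, ?_⟩
      rw [← key ξ (hIcc_sub hξmem)]
      rw [hslope]
      field_simp [hθ0]
      ring
  -- main
  clear_value r m a'
  refine ⟨a', ⟨ha'pos, ha'a⟩, m/8, M, by positivity, hM_pos, ?_⟩
  intro θ hθ α hα
  have hθa : θ ∈ Icc (-a) a := hIcc_sub hθ
  have hAθ : |A₁ θ| < π/8 := hA₁small θ hθ
  have hθabs : |θ| ≤ a' := abs_le.mpr ⟨hθ.1, hθ.2⟩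
  have hαabs : |α| ≤ π/2 := abs_le.mpr ⟨hα.1, hα.2⟩
  set A := A₁ θ with hAdef
  have hO := hortho θ hθa
  have h2A := Real.sin_sq_add_cos_sq A
  set Δ1 := (y θ - y 0).1 with hΔ1def
  set Δ2 := (y θ - y 0).2 with hΔ2def
  set ρ : ℝ := -Real.sin A * Δ1 + Real.cos A * Δ2 with hρdef
  have hΔ1e : Δ1 = -Real.sin A * ρ := by
    simp only [hρdef]
    linear_combination Real.cos A * hO - Δ1 * h2A
  have hΔ2e : Δ2 = Real.cos A * ρ := by
    simp only [hρdef]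
    linear_combination Real.sin A * hO - Δ2 * h2A
  clear_value A Δ1 Δ2 ρ
  -- ρ = k θ  for θ ≠ 0
  have hk : θ ≠ 0 → ∃ k : ℝ, ρ = k * θ ∧ -M ≤ k ∧ k ≤ -(m/2) := by
    intro h0
    obtain ⟨ξ, hξmem, heq⟩ := hMVT A θ hθ h0
    have hξa : ξ ∈ Icc (-a) a := hIcc_sub hξmem
    have hξabs : |ξ| ≤ π/8 := le_trans (abs_le.mpr ⟨hξmem.1, hξmem.2⟩) ha'π
    refine ⟨r ξ * Real.cos (A - ξ), ?_, ?_, ?_⟩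
    · rw [hρdef, hΔ1def, hΔ2def, Prod.fst_sub, Prod.snd_sub, ← heq]
    · have hc2 : Real.cos (A - ξ) ≤ 1 := Real.cos_le_one _
      have hr1 := hrle ξ hξa
      have hr2 := (abs_le.mp (hMr ξ hξa)).1
      have hneg : r ξ ≤ 0 := by linarith
      have h1 : r ξ * 1 ≤ r ξ * Real.cos (A - ξ) := mul_le_mul_of_nonpos_left hc2 hneg
      linarith
    · have habs : |A - ξ| ≤ π/4 := by
        calc |A - ξ| ≤ |A| + |ξ| := abs_sub A ξ
          _ ≤ π/4 := by linarith
      have hc1 : 1/2 ≤ Real.cos (A - ξ) := by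
        have h1 := Real.one_sub_sq_div_two_le_cos (x := A - ξ)
        have hsq : (A - ξ)^2 ≤ (π/4)^2 := by
          rw [← sq_abs]
          exact pow_le_pow_left₀ (abs_nonneg _) habs 2
        nlinarith [hpi1, hpi2]
      have hr1 := hrle ξ hξa
      have hneg : r ξ ≤ 0 := by linarith
      have h1 : r ξ * Real.cos (A - ξ) ≤ r ξ * (1/2) := mul_le_mul_of_nonpos_left hc1 hneg
      linarith
  -- R₁ formula
  have hR : Real.cos α * Δ1 + Real.sin α * Δ2 = -ρ * Real.sin (A - α) := by
    rw [hΔ1e, hΔ2e, Real.sin_sub]; ring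
  have hzero : θ = 0 → Δ1 = 0 ∧ Δ2 = 0 := by
    intro h0
    rw [hΔ1def, hΔ2def, h0, sub_self]
    exact ⟨rfl, rfl⟩
  refine ⟨⟨?_, ?_⟩, ?_, ?_⟩
  · -- iff
    constructor
    · intro hRz
      by_contra hne
      rcases mul_ne_zero_iff.mp hne with ⟨hθ0, ht0⟩
      obtain ⟨k, hkeq, hk1, hk2⟩ := hk hθ0
      have hρne : ρ ≠ 0 := by
        rw [hkeq]
        exact mul_ne_zero (by intro h; rw [h] at hk2; linarith) hθ0
      have ht'abs : |A - α| ≤ 3 * π / 4 := by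
        calc |A - α| ≤ |A| + |α| := abs_sub _ _
          _ ≤ 3 * π / 4 := by linarith
      have hsne : Real.sin (A - α) ≠ 0 := by
        obtain ⟨q1, q2⟩ := sin_div_bounds ht0 ht'abs
        intro hz
        rw [hz, zero_div] at q1
        linarith
      rw [hR] at hRz
      exact (mul_ne_zero (neg_ne_zero.mpr hρne) hsne) hRz
    · intro hz
      rcases mul_eq_zero.mp hz with h0 | h0
      · obtain ⟨e1, e2⟩ := hzero h0
        rw [e1, e2]; ring
      · rw [hR, sub_eq_zero.mp (by linarith [h0] : A - α = 0)]
        simp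
  · -- quotient bounds (i)
    intro hne
    rcases mul_ne_zero_iff.mp hne with ⟨hθ0, ht0⟩
    obtain ⟨k, hkeq, hk1, hk2⟩ := hk hθ0
    have ht'abs : |A - α| ≤ 3 * π / 4 := by
      calc |A - α| ≤ |A| + |α| := abs_sub _ _
        _ ≤ 3 * π / 4 := by linarith
    obtain ⟨q1, q2⟩ := sin_div_bounds ht0 ht'abs
    have hquot : (Real.cos α * Δ1 + Real.sin α * Δ2) / (θ * (A - α))
        = (-k) * (Real.sin (A - α) / (A - α)) := by
      rw [hR, hkeq]
      field_simp
    rw [hquot]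
    have hx1 : m/2 ≤ -k := by linarith
    have hx2 : -k ≤ M := by linarith
    constructor
    · have := mul_le_mul hx1 q1 (by norm_num) (by linarith)
      linarith
    · have := mul_le_mul hx2 q2 (by linarith) (by linarith)
      linarith
  · -- part (ii)
    intro hne
    obtain ⟨e1, e2⟩ := hcomp θ hθa
    have hE : Real.cos α * (deriv y θ).1 + Real.sin α * (deriv y θ).2
        = (-r θ) * Real.sin (θ - α) := by
      rw [e1, e2, Real.sin_sub]; ring
    have ht0 : θ - α ≠ 0 := sub_ne_zero.mpr hne
    have htabs : |θ - α| ≤ 3 * π / 4 := by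
      calc |θ - α| ≤ |θ| + |α| := abs_sub _ _
        _ ≤ 3 * π / 4 := by linarith
    obtain ⟨q1, q2⟩ := sin_div_bounds ht0 htabs
    have hr1 := hrle θ hθa
    have hr2 := (abs_le.mp (hMr θ hθa)).1
    rw [hE, mul_div_assoc]
    have hx1 : m ≤ -r θ := by linarith
    have hx2 : -r θ ≤ M := by linarith
    constructor
    · have := mul_le_mul hx1 q1 (by norm_num) (by linarith)
      linarith
    · have := mul_le_mul hx2 q2 (by linarith) (by linarith)
      linarith
  · -- part (iii)
    have hE : -Real.sin α * Δ1 + Real.cos α * Δ2 = ρ * Real.cos (α - A) := by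
      rw [hΔ1e, hΔ2e, Real.cos_sub]; ring
    have hρb : |ρ| ≤ M * |θ| := by
      rcases eq_or_ne θ 0 with h0 | h0
      · obtain ⟨e1, e2⟩ := hzero h0
        rw [hρdef, e1, e2, h0]
        simp
      · obtain ⟨k, hkeq, hk1, hk2⟩ := hk h0
        rw [hkeq, abs_mul]
        apply mul_le_mul_of_nonneg_right _ (abs_nonneg _)
        rw [abs_le]
        constructor <;> linarith
    rw [hE, abs_mul]
    calc |ρ| * |Real.cos (α - A)| ≤ |ρ| * 1 := by
          apply mul_le_mul_of_nonneg_left (Real.abs_cos_le_one _) (abs_nonneg _)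
      _ = |ρ| := mul_one _
      _ ≤ M * |θ| := hρb
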